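/- Let (A, m) be a Noetherian local ring and let M be a finitely generated A-module that is equidimensional, i.e. for every minimal prime p over the annihilator Ann_A M one has dim(A/p) = dim(A/Ann_A M) (Krull dimensions of the quotient rings). Let I ⊆ J be ideals of A such that dim(A/(I + Ann_A M)) < dim(A/Ann_A M) (equivalently, dim M/IM < dim M). If for some k ≥ 1 and some n one has I • (Jⁿ • (Iᵏ • M)) = J^{n+1} • (Iᵏ • M), then there exists n' with I • (Jⁿ' • M) = J^{n'+1} • M; that is, if I is a reduction of (J, IᵏM), then I is a reduction of (J, M). (Part (3) of the five-part Lemma in Section 4.) -/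

import Mathlib

open Polynomial

section Helpers

variable {A : Type*} [CommRing A]

private lemma aux_mul_smul {M : Type*} [AddCommGroup M] [Module A M] (K L : Ideal A)
    (N : Submodule A M) : (K * L) • N = K • (L • N) := by
  rw [← Ideal.smul_eq_mul, Submodule.smul_assoc]

private lemma graded_mul (I : Ideal A) {p q : A[X]} (hp : p.Monic) (hq : q.Monic)
    (Hp : ∀ i, p.coeff i ∈ I ^ (p.natDegree - i))
    (Hq : ∀ i, q.coeff i ∈ I ^ (q.natDegree - i)) :
    ∀ i, (p * q).coeff i ∈ I ^ ((p * q).natDegree - i) := by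
  intro i
  rw [hp.natDegree_mul hq, Polynomial.coeff_mul]
  refine Ideal.sum_mem _ ?_
  rintro ⟨a, b⟩ hab
  rw [Finset.HasAntidiagonal.mem_antidiagonal] at hab
  have h1 : p.coeff a * q.coeff b ∈ I ^ (p.natDegree - a) * I ^ (q.natDegree - b) :=
    Ideal.mul_mem_mul (Hp a) (Hq b)
  rw [← pow_add] at h1
  exact Ideal.pow_le_pow_right (by omega) h1

private lemma graded_pow (I : Ideal A) {p : A[X]} (hp : p.Monic)
    (Hp : ∀ i, p.coeff i ∈ I ^ (p.natDegree - i)) (s : ℕ) :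
    ∀ i, (p ^ s).coeff i ∈ I ^ ((p ^ s).natDegree - i) := by
  induction s with
  | zero => intro i; simp
  | succ s ih =>
    rw [pow_succ]
    exact graded_mul I (hp.pow s) hp ih Hp

private lemma pow_smul_le_of_poly {M : Type*} [AddCommGroup M] [Module A M]
    (I J : Ideal A) (hIJ : I ≤ J) {x : A} (hx : x ∈ J) {q : A[X]} (hq : q.Monic)
    {D : ℕ} (hD : q.natDegree = D) (hD1 : 1 ≤ D)
    (Hq : ∀ i, q.coeff i ∈ I ^ (D - i))
    (hann : ∀ m : M, q.eval x • m = 0) :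
    Ideal.span {x} ^ D • (⊤ : Submodule A M) ≤ (I * J ^ (D - 1)) • ⊤ := by
  have hterm : ∀ i, i < D → I ^ (D - i) * J ^ i ≤ I * J ^ (D - 1) := by
    intro i hi
    have h1 : I ^ (D - i) = I * I ^ (D - i - 1) := by
      rw [← pow_succ']; congr 1; omega
    rw [h1, mul_assoc]
    refine Ideal.mul_mono le_rfl ?_
    calc I ^ (D - i - 1) * J ^ i ≤ J ^ (D - i - 1) * J ^ i :=
          Ideal.mul_mono (Ideal.pow_right_mono hIJ _) le_rfl
      _ = J ^ (D - 1) := by rw [← pow_add]; congr 1; omega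
  have hmain : ∀ m : M, x ^ D • m ∈ (I * J ^ (D - 1)) • (⊤ : Submodule A M) := by
    intro m
    have h0 := hann m
    rw [Polynomial.eval_eq_sum_range, hD, Finset.sum_range_succ] at h0
    have hcD : q.coeff D = 1 := by rw [← hD]; exact hq.coeff_natDegree
    rw [hcD, one_mul, add_smul] at h0
    have hx' : x ^ D • m = -((∑ i ∈ Finset.range D, q.coeff i * x ^ i) • m) :=
      eq_neg_of_add_eq_zero_right h0
    rw [hx', Finset.sum_smul]
    refine neg_mem (Submodule.sum_mem _ ?_)
    intro i hi
    rw [Finset.mem_range] at hi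
    rw [mul_smul (q.coeff i) (x ^ i) m]
    have h2 : x ^ i • m ∈ J ^ i • (⊤ : Submodule A M) :=
      Submodule.smul_mem_smul (Ideal.pow_mem_pow hx i) Submodule.mem_top
    have h3 : q.coeff i • (x ^ i • m) ∈ I ^ (D - i) • (J ^ i • (⊤ : Submodule A M)) :=
      Submodule.smul_mem_smul (Hq i) h2
    have h4 : I ^ (D - i) • (J ^ i • (⊤ : Submodule A M)) ≤ (I * J ^ (D - 1)) • ⊤ := by
      rw [← aux_mul_smul]; exact Submodule.smul_mono_left (hterm i hi)
    exact h4 h3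
  refine Submodule.smul_le.mpr ?_
  rintro r hr m -
  rw [Ideal.span_singleton_pow] at hr
  obtain ⟨b, rfl⟩ := Ideal.mem_span_singleton'.mp hr
  rw [mul_smul b (x ^ D) m]
  exact Submodule.smul_mem _ b (hmain m)

private lemma ideal_sum_le {ι : Type*} (s : Finset ι) (f : ι → Ideal A) (T : Ideal A)
    (h : ∀ i ∈ s, f i ≤ T) : ∑ i ∈ s, f i ≤ T := by
  classical
  induction s using Finset.induction_on with
  | empty => simp
  | @insert x t hx ih =>
    rw [Finset.sum_insert hx]
    rw [Submodule.add_eq_sup]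
    exact sup_le (h _ (Finset.mem_insert_self _ _)) (ih fun i hi => h i (Finset.mem_insert_of_mem hi))

private lemma binom (P Q : Ideal A) (a b : ℕ) :
    (P ⊔ Q) ^ (a + b + 1) ≤ P ^ (a + 1) * (P ⊔ Q) ^ b ⊔ Q ^ (b + 1) * (P ⊔ Q) ^ a := by
  have hPQ : P ⊔ Q = P + Q := (Submodule.add_eq_sup _ _).symm
  rw [hPQ, add_pow]
  refine ideal_sum_le _ _ _ ?_
  intro kk hk
  rw [Finset.mem_range] at hk
  have hP : P ≤ P + Q := by rw [Submodule.add_eq_sup]; exact le_sup_left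
  have hQ : Q ≤ P + Q := by rw [Submodule.add_eq_sup]; exact le_sup_right
  refine (Ideal.mul_le_left (J := ((a + b + 1).choose kk : Ideal A))).trans ?_
  rcases le_or_gt (a + 1) kk with h | h
  · refine le_trans ?_ le_sup_left
    have h1 : P ^ kk = P ^ (a + 1) * P ^ (kk - (a + 1)) := by
      rw [← pow_add]; congr 1; omega
    rw [h1, mul_assoc]
    refine Ideal.mul_mono le_rfl ?_
    calc P ^ (kk - (a + 1)) * Q ^ (a + b + 1 - kk)
        ≤ (P + Q) ^ (kk - (a + 1)) * (P + Q) ^ (a + b + 1 - kk) :=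
          Ideal.mul_mono (Ideal.pow_right_mono hP _) (Ideal.pow_right_mono hQ _)
      _ = (P + Q) ^ b := by rw [← pow_add]; congr 1; omega
  · refine le_trans ?_ le_sup_right
    have h1 : Q ^ (a + b + 1 - kk) = Q ^ (b + 1) * Q ^ (a - kk) := by
      rw [← pow_add]; congr 1; omega
    rw [h1, mul_comm (P ^ kk), mul_assoc]
    refine Ideal.mul_mono le_rfl ?_
    calc Q ^ (a - kk) * P ^ kk
        ≤ (P + Q) ^ (a - kk) * (P + Q) ^ kk :=
          Ideal.mul_mono (Ideal.pow_right_mono hQ _) (Ideal.pow_right_mono hP _)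
      _ = (P + Q) ^ a := by rw [← pow_add]; congr 1; omega

private lemma upgrade {M : Type*} [AddCommGroup M] [Module A M] (I J : Ideal A) (hIJ : I ≤ J)
    {x : A} (hx : x ∈ J) {d D : ℕ} (hd : 1 ≤ d) (hdD : d ≤ D)
    (h : Ideal.span {x} ^ d • (⊤ : Submodule A M) ≤ (I * J ^ (d - 1)) • ⊤) :
    Ideal.span {x} ^ D • (⊤ : Submodule A M) ≤ (I * J ^ (D - 1)) • ⊤ := by
  have hxJ : Ideal.span {x} ≤ J := Ideal.span_le.mpr (Set.singleton_subset_iff.mpr hx)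
  have h1 : Ideal.span {x} ^ D = Ideal.span {x} ^ (D - d) * Ideal.span {x} ^ d := by
    rw [← pow_add]; congr 1; omega
  rw [h1, aux_mul_smul]
  calc Ideal.span {x} ^ (D - d) • (Ideal.span {x} ^ d • (⊤ : Submodule A M))
      ≤ J ^ (D - d) • ((I * J ^ (d - 1)) • ⊤) :=
        Submodule.smul_mono (Ideal.pow_right_mono hxJ _) h
    _ = (J ^ (D - d) * (I * J ^ (d - 1))) • ⊤ := (aux_mul_smul _ _ _).symm
    _ = (I * J ^ (D - 1)) • ⊤ := by
        rw [mul_left_comm, ← pow_add]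
        have he : D - d + (d - 1) = D - 1 := by omega
        rw [he]

private lemma finset_red {M : Type*} [AddCommGroup M] [Module A M] (I J : Ideal A)
    (D : ℕ) (hD : 1 ≤ D) :
    ∀ t : Finset A, Ideal.span (t : Set A) ≤ J →
      (∀ x ∈ t, Ideal.span {x} ^ D • (⊤ : Submodule A M) ≤ (I * J ^ (D - 1)) • ⊤) →
      Ideal.span (t : Set A) ^ (t.card * (D - 1) + 1) • (⊤ : Submodule A M)
        ≤ (I * J ^ (t.card * (D - 1))) • ⊤ := by
  classical
  intro t
  induction t using Finset.induction_on with
  | empty =>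
    intro _ _
    simp
  | @insert x t hx ih =>
    intro hle H
    rw [Finset.coe_insert, Ideal.span_insert] at hle ⊢
    have hsup : Ideal.span {x} ⊔ Ideal.span (t : Set A) ≤ J := hle
    rw [Finset.card_insert_of_notMem hx]
    have hexp1 : (t.card + 1) * (D - 1) + 1 = (D - 1) + t.card * (D - 1) + 1 := by ring
    have hexp2 : (t.card + 1) * (D - 1) = (D - 1) + t.card * (D - 1) := by ring
    rw [hexp1, hexp2]
    refine le_trans (Submodule.smul_mono_left
      (binom (Ideal.span {x}) (Ideal.span (t : Set A)) (D - 1) (t.card * (D - 1)))) ?_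
    rw [Submodule.sup_smul]
    have hDeq : D - 1 + 1 = D := by omega
    apply sup_le
    · rw [hDeq]
      calc (Ideal.span {x} ^ D * (Ideal.span {x} ⊔ Ideal.span (t : Set A)) ^ (t.card * (D - 1)))
            • (⊤ : Submodule A M)
          = (Ideal.span {x} ⊔ Ideal.span (t : Set A)) ^ (t.card * (D - 1))
              • (Ideal.span {x} ^ D • ⊤) := by rw [mul_comm, aux_mul_smul]
        _ ≤ J ^ (t.card * (D - 1)) • ((I * J ^ (D - 1)) • ⊤) :=
            Submodule.smul_mono (Ideal.pow_right_mono hsup _)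
              (H x (Finset.mem_insert_self _ _))
        _ = (J ^ (t.card * (D - 1)) * (I * J ^ (D - 1))) • ⊤ := (aux_mul_smul _ _ _).symm
        _ = (I * J ^ (D - 1 + t.card * (D - 1))) • ⊤ := by
            rw [mul_left_comm, ← pow_add]
            have he : t.card * (D - 1) + (D - 1) = D - 1 + t.card * (D - 1) := by ring
            rw [he]
    · have ihs := ih (le_trans le_sup_right hsup)
        (fun y hy => H y (Finset.mem_insert_of_mem hy))
      calc (Ideal.span (t : Set A) ^ (t.card * (D - 1) + 1)
              * (Ideal.span {x} ⊔ Ideal.span (t : Set A)) ^ (D - 1)) • (⊤ : Submodule A M)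
          = (Ideal.span {x} ⊔ Ideal.span (t : Set A)) ^ (D - 1)
              • (Ideal.span (t : Set A) ^ (t.card * (D - 1) + 1) • ⊤) := by
            rw [mul_comm, aux_mul_smul]
        _ ≤ J ^ (D - 1) • ((I * J ^ (t.card * (D - 1))) • ⊤) :=
            Submodule.smul_mono (Ideal.pow_right_mono hsup _) ihs
        _ = (J ^ (D - 1) * (I * J ^ (t.card * (D - 1)))) • ⊤ := (aux_mul_smul _ _ _).symm
        _ = (I * J ^ (D - 1 + t.card * (D - 1))) • ⊤ := by
            rw [mul_left_comm, ← pow_add]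

end Helpers

/-- Part (3) of the five-part Lemma in Section 4: for an equidimensional finitely
generated module `M` over a Noetherian local ring with `dim M/IM < dim M`, if `I`
is a reduction of `(J, IᵏM)` for some `k ≥ 1`, then `I` is a reduction of `(J, M)`. -/
theorem stmt_6 {A M : Type*} [CommRing A] [IsLocalRing A] [IsNoetherianRing A]
    [AddCommGroup M] [Module A M] [Module.Finite A M]
    (hequi : ∀ p ∈ (Module.annihilator A M).minimalPrimes,
      ringKrullDim (A ⧸ p) = ringKrullDim (A ⧸ Module.annihilator A M))
    (I J : Ideal A) (hIJ : I ≤ J)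
    (hdim : ringKrullDim (A ⧸ (I ⊔ Module.annihilator A M))
      < ringKrullDim (A ⧸ Module.annihilator A M))
    (k : ℕ) (hk : 1 ≤ k)
    (hred : ∃ n : ℕ, I • (J ^ n • (I ^ k • (⊤ : Submodule A M)))
      = J ^ (n + 1) • (I ^ k • (⊤ : Submodule A M))) :
    ∃ n' : ℕ, I • (J ^ n' • (⊤ : Submodule A M)) = J ^ (n' + 1) • (⊤ : Submodule A M) := by
  classical
  obtain ⟨n, hn⟩ := hred
  haveI : IsNoetherian A M := isNoetherian_of_isNoetherianRing_of_finite A M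
  -- Step 1 : `I` is not contained in any minimal prime over the annihilator.
  have hIp : ∀ p ∈ (Module.annihilator A M).minimalPrimes, ¬ I ≤ p := by
    intro p hp hIle
    have hle : I ⊔ Module.annihilator A M ≤ p := sup_le hIle hp.1.2
    have hsurj : Function.Surjective (Ideal.Quotient.factor hle) := by
      intro y
      obtain ⟨a, rfl⟩ := Ideal.Quotient.mk_surjective y
      exact ⟨Ideal.Quotient.mk _ a, Ideal.Quotient.factor_mk hle a⟩
    have hDle := ringKrullDim_le_of_surjective _ hsurj
    rw [hequi p hp] at hDle
    exact absurd (lt_of_le_of_lt hDle hdim) (lt_irrefl _)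
  -- the key submodule
  have h3 : J • (J ^ n • (I ^ k • (⊤ : Submodule A M))) = I • (J ^ n • (I ^ k • ⊤)) := by
    rw [← aux_mul_smul, ← pow_succ']
    exact hn.symm
  set N' : Submodule A M := J ^ n • (I ^ k • ⊤) with hN'
  haveI : Module.Finite A N' := Module.Finite.iff_fg.mpr (IsNoetherian.noetherian N')
  -- Key step : every `x ∈ J` satisfies a homogeneous relation on all of `M`.
  have key : ∀ x ∈ J, ∃ D : ℕ, 1 ≤ D ∧
      Ideal.span {x} ^ D • (⊤ : Submodule A M) ≤ (I * J ^ (D - 1)) • ⊤ := by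
    intro x hx
    set f : Module.End A N' := algebraMap A (Module.End A N') x with hf
    have hrange : LinearMap.range f ≤ I • (⊤ : Submodule A N') := by
      rintro v ⟨w, rfl⟩
      have h1 : x • (w : M) ∈ I • N' := by
        have h2 : x • (w : M) ∈ J • N' := Submodule.smul_mem_smul hx w.2
        rwa [h3] at h2
      have h4 : Submodule.map N'.subtype (I • ⊤) = I • N' := by
        rw [Submodule.map_smul'', Submodule.map_top, Submodule.range_subtype]
      rw [← h4] at h1
      obtain ⟨u, hu, huv⟩ := h1
      have hfw : f w = x • w := rfl
      have huw : u = x • w := Subtype.ext (by simpa using huv)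
      rw [hfw, ← huw]
      exact hu
    obtain ⟨p, hmonic, -, hcoeff, haeval⟩ :=
      LinearMap.exists_monic_and_coeff_mem_pow_and_aeval_eq_zero_of_range_le_smul A f I hrange
    set q : A[X] := X * p with hq
    have hqmonic : q.Monic := (monic_X).mul hmonic
    have hqdeg : q.natDegree = 1 + p.natDegree := by
      rw [hq, (monic_X).natDegree_mul hmonic, natDegree_X]
    have hXcoeff : ∀ i, (X : A[X]).coeff i ∈ I ^ ((X : A[X]).natDegree - i) := by
      intro i
      rw [Polynomial.natDegree_X]
      rcases eq_or_ne i 1 with rfl | h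
      · simp
      · rw [Polynomial.coeff_X, if_neg fun hh => h hh.symm]
        exact zero_mem _
    have hqcoeff : ∀ i, q.coeff i ∈ I ^ (q.natDegree - i) :=
      graded_mul I monic_X hmonic hXcoeff hcoeff
    -- `q.eval x` annihilates `N'`
    have hann : ∀ w ∈ N', q.eval x • w = (0 : M) := by
      intro w hw
      have h0 : Polynomial.aeval f q = 0 := by
        rw [hq, map_mul, haeval, mul_zero]
      have he : Polynomial.aeval x q = q.eval x := congrFun (Polynomial.coe_aeval_eq_eval x) q
      have h1 : (Polynomial.aeval f q) ⟨w, hw⟩ = 0 := by rw [h0]; rfl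
      rw [hf, Polynomial.aeval_algebraMap_apply, he, Module.algebraMap_end_apply] at h1
      have := congrArg (Subtype.val) h1
      simpa using this
    -- `q.eval x` is in the radical of the annihilator of `M`
    have hrad : q.eval x ∈ (Module.annihilator A M).radical := by
      rw [Ideal.radical_eq_sInf]
      refine Submodule.mem_sInf.mpr ?_
      rintro P ⟨hPle, hPprime⟩
      haveI := hPprime
      obtain ⟨p', hp', hp'le⟩ := Ideal.exists_minimalPrimes_le hPle
      refine hp'le ?_
      haveI hprime : p'.IsPrime := hp'.1.1
      have hNeq : (J ^ n * I ^ k) • (⊤ : Submodule A M) = N' := aux_mul_smul _ _ _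
      have hc : Ideal.span {q.eval x} * (J ^ n * I ^ k) ≤ Module.annihilator A M := by
        rw [Ideal.mul_le]
        intro r hr a ha
        obtain ⟨b, rfl⟩ := Ideal.mem_span_singleton'.mp hr
        have hca : q.eval x * a ∈ Module.annihilator A M := by
          rw [Module.mem_annihilator]
          intro m
          rw [mul_smul]
          refine hann _ ?_
          rw [← hNeq]
          exact Submodule.smul_mem_smul ha Submodule.mem_top
        have : b * q.eval x * a = b * (q.eval x * a) := by ring
        rw [this]
        exact Ideal.mul_mem_left _ b hca
      have hcp : Ideal.span {q.eval x} * (J ^ n * I ^ k) ≤ p' := hc.trans hp'.1.2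
      rcases hprime.mul_le.mp hcp with h | h
      · exact h (Ideal.mem_span_singleton_self _)
      · exfalso
        have hIk : I ^ (n + k) ≤ p' := by
          refine le_trans ?_ h
          rw [pow_add]
          exact Ideal.mul_mono (Ideal.pow_right_mono hIJ n) le_rfl
        have hnk : n + k ≠ 0 := by omega
        exact hIp p' hp' ((Ideal.IsPrime.pow_le_iff hnk).mp hIk)
    obtain ⟨s0, hs0⟩ := Ideal.mem_radical_iff.mp hrad
    have hcs : (q.eval x) ^ (s0 + 1) ∈ Module.annihilator A M := by
      rw [pow_succ]
      exact Ideal.mul_mem_right _ _ hs0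
    have hQm : (q ^ (s0 + 1)).Monic := hqmonic.pow _
    have hQdeg : (q ^ (s0 + 1)).natDegree = (s0 + 1) * q.natDegree := hqmonic.natDegree_pow _
    have hQ1 : 1 ≤ (q ^ (s0 + 1)).natDegree := by
      rw [hQdeg, hqdeg]
      have : 1 ≤ 1 + p.natDegree := by omega
      calc 1 ≤ 1 + p.natDegree := this
        _ ≤ (s0 + 1) * (1 + p.natDegree) := Nat.le_mul_of_pos_left _ (Nat.succ_pos s0)
    have hQcoeff : ∀ i, (q ^ (s0 + 1)).coeff i ∈ I ^ ((q ^ (s0 + 1)).natDegree - i) :=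
      graded_pow I hqmonic hqcoeff (s0 + 1)
    have hQann : ∀ m : M, (q ^ (s0 + 1)).eval x • m = 0 := by
      intro m
      rw [Polynomial.eval_pow]
      exact Module.mem_annihilator.mp hcs m
    exact ⟨(q ^ (s0 + 1)).natDegree, hQ1,
      pow_smul_le_of_poly I J hIJ hx hQm rfl hQ1 hQcoeff hQann⟩
  -- uniformize the degrees over a finite generating set
  obtain ⟨s, hsJ⟩ : ∃ s : Finset A, Ideal.span (s : Set A) = J := IsNoetherian.noetherian J
  have huni : ∀ t : Finset A, ((t : Set A) ⊆ (J : Set A)) →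
      ∃ D : ℕ, 1 ≤ D ∧ ∀ x ∈ t,
        Ideal.span {x} ^ D • (⊤ : Submodule A M) ≤ (I * J ^ (D - 1)) • ⊤ := by
    intro t
    induction t using Finset.induction_on with
    | empty => intro _; exact ⟨1, le_rfl, by simp⟩
    | @insert x t hx ih =>
      intro hsub
      have hxJ : x ∈ J := hsub (by simp)
      obtain ⟨Dt, hDt1, hDt⟩ := ih (fun y hy => hsub (by simp [Finset.mem_coe.mp hy]))
      obtain ⟨Dx, hDx1, hDx⟩ := key x hxJ
      refine ⟨max Dx Dt, le_trans hDx1 (le_max_left _ _), ?_⟩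
      intro y hy
      rcases Finset.mem_insert.mp hy with rfl | hy'
      · exact upgrade I J hIJ hxJ hDx1 (le_max_left _ _) hDx
      · exact upgrade I J hIJ (hsub (by simp [hy'])) hDt1 (le_max_right _ _) (hDt y hy')
  obtain ⟨D, hD1, hDall⟩ := huni s (by rw [← hsJ]; exact Ideal.subset_span)
  refine ⟨s.card * (D - 1), ?_⟩
  apply le_antisymm
  · calc I • (J ^ (s.card * (D - 1)) • (⊤ : Submodule A M))
        = (I * J ^ (s.card * (D - 1))) • ⊤ := (aux_mul_smul _ _ _).symm
      _ ≤ (J * J ^ (s.card * (D - 1))) • ⊤ :=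
          Submodule.smul_mono_left (Ideal.mul_mono hIJ le_rfl)
      _ = J ^ (s.card * (D - 1) + 1) • ⊤ := by rw [← pow_succ']
  · have hfin := finset_red I J D hD1 s (by rw [hsJ]) hDall
    rw [hsJ] at hfin
    calc J ^ (s.card * (D - 1) + 1) • (⊤ : Submodule A M)
        ≤ (I * J ^ (s.card * (D - 1))) • ⊤ := hfin
      _ = I • (J ^ (s.card * (D - 1)) • ⊤) := aux_mul_smul _ _ _
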